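/- Let p be an odd prime, n ≥ 1, q = p^n, and let F(x) = x^{q − 2} be the inverse power function over GF(q). Let c ∈ GF(q) with c ∉ {0, 1, 4, 4^{-1}}. If χ(c² − 4c) = −1, χ(1 − 4c) = −1, and χ(c) = 1, then the c-differential spectrum of F is given by ω_0 = (q − 5)/2, ω_1 = 5, ω_2 = (q − 5)/2, and ω_i = 0 for i ≥ 3. -/
import Mathlib

open Finset

/-- `cdelta F d c b` is the number of `x` in the finite field `F` with
`(x+1)^d - c * x^d = b`, i.e. the entry `δ_c(b)` of the `c`-DDT of `x ↦ x^d`. -/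
noncomputable def cdelta (F : Type*) [Field F] (d : ℕ) (c b : F) : ℕ :=
  Nat.card {x : F // (x + 1) ^ d - c * x ^ d = b}

/-- `comega F d c i` is the number of `b` in `F` with `δ_c(b) = i`,
i.e. the value `ω_i` of the `c`-differential spectrum of `x ↦ x^d`. -/
noncomputable def comega (F : Type*) [Field F] (d : ℕ) (c : F) (i : ℕ) : ℕ :=
  Nat.card {b : F // cdelta F d c b = i}

open scoped Classical in
/-- The quadratic character of `F`, valued in `ℤ`. -/
noncomputable def chi (F : Type*) [Field F] (x : F) : ℤ :=
  if x = 0 then 0 else if IsSquare x then 1 else -1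

section Aux

variable {F : Type*} [Field F] [Fintype F] [DecidableEq F]

omit [DecidableEq F] in
lemma pow_csub2 (hq : 3 ≤ Fintype.card F) (x : F) :
    x ^ (Fintype.card F - 2) = x⁻¹ := by
  rcases eq_or_ne x 0 with rfl | hx
  · rw [zero_pow (by omega), inv_zero]
  · have h1 : x ^ (Fintype.card F - 1) = 1 := FiniteField.pow_card_sub_one_eq_one x hx
    have h2 : x ^ (Fintype.card F - 2) * x = 1 := by
      rw [← pow_succ, show Fintype.card F - 2 + 1 = Fintype.card F - 1 by omega]; exact h1
    calc x ^ (Fintype.card F - 2) = x ^ (Fintype.card F - 2) * x * x⁻¹ := by field_simp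
    _ = x⁻¹ := by rw [h2, one_mul]

lemma quad_roots_two (h2 : (2:F) ≠ 0) {a e f : F} (ha : a ≠ 0) {u : F} (hu : u ≠ 0)
    (hd : discrim a e f = u * u) :
    (univ.filter fun x : F => a*x^2 + e*x + f = 0).card = 2 := by
  haveI : NeZero (2:F) := ⟨h2⟩
  have hset : (univ.filter fun x : F => a*x^2 + e*x + f = 0)
      = {(-e + u)/(2*a), (-e - u)/(2*a)} := by
    ext x
    simp only [mem_filter, mem_univ, true_and, mem_insert, mem_singleton]
    rw [show a*x^2+e*x+f = a*(x*x)+e*x+f by ring]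
    exact quadratic_eq_zero_iff ha hd x
  rw [hset, card_insert_of_notMem, card_singleton]
  simp only [mem_singleton]
  intro h
  have h2a : (2*a) ≠ 0 := mul_ne_zero h2 ha
  rw [div_eq_div_iff h2a h2a] at h
  have h3 : (-e + u) = (-e - u) := mul_right_cancel₀ h2a h
  have h4 : (2:F) * u = 0 := by linear_combination h3
  exact hu (by rcases mul_eq_zero.mp h4 with h | h; exact absurd h h2; exact h)

lemma quad_roots_one (h2 : (2:F) ≠ 0) {a e f : F} (ha : a ≠ 0)
    (hd : discrim a e f = 0) :
    (univ.filter fun x : F => a*x^2 + e*x + f = 0).card = 1 := by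
  haveI : NeZero (2:F) := ⟨h2⟩
  have hset : (univ.filter fun x : F => a*x^2 + e*x + f = 0) = {-e/(2*a)} := by
    ext x
    simp only [mem_filter, mem_univ, true_and, mem_singleton]
    rw [show a*x^2+e*x+f = a*(x*x)+e*x+f by ring]
    exact quadratic_eq_zero_iff_of_discrim_eq_zero ha hd x
  rw [hset, card_singleton]

lemma quad_roots_zero {a e f : F} (hd : ∀ s : F, discrim a e f ≠ s * s) :
    (univ.filter fun x : F => a*x^2 + e*x + f = 0).card = 0 := by
  rw [card_eq_zero, filter_eq_empty_iff]
  intro x _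
  have := quadratic_ne_zero_of_discrim_ne_sq (a := a) (b := e) (c := f)
    (fun s => by rw [sq]; exact hd s) x
  intro hcon; exact this (by linear_combination hcon)

lemma lin_roots {e f : F} (he : e ≠ 0) :
    (univ.filter fun x : F => e*x + f = 0).card = 1 := by
  have hset : (univ.filter fun x : F => e*x + f = 0) = {-f/e} := by
    ext x
    simp only [mem_filter, mem_univ, true_and, mem_singleton]
    constructor
    · intro h; field_simp; linear_combination h
    · intro h; subst h; field_simp; ring
  rw [hset, card_singleton]

lemma delta_decomp (hq : 3 ≤ Fintype.card F) {c : F} (hc0 : c ≠ 0) (hc1 : c ≠ 1) (b : F) :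
    (univ.filter fun x : F => (x+1)^(Fintype.card F - 2) - c*x^(Fintype.card F - 2) = b).card
    = (univ.filter fun x : F => b*x^2 + (b+c-1)*x + c = 0).card
      + ((if b = 1 then 1 else 0) + (if b = c then 1 else 0)) := by
  have key : (univ.filter fun x : F => (x+1)^(Fintype.card F - 2) - c*x^(Fintype.card F - 2) = b)
      = (univ.filter fun x : F => b*x^2 + (b+c-1)*x + c = 0)
        ∪ ((if b = 1 then ({0} : Finset F) else ∅) ∪ (if b = c then ({-1} : Finset F) else ∅)) := by
    ext x
    simp only [mem_filter, mem_univ, true_and, mem_union, pow_csub2 hq]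
    constructor
    · intro h
      rcases eq_or_ne x 0 with rfl | hx0
      · have hb : b = 1 := by simpa using h.symm
        right; left; simp [hb]
      rcases eq_or_ne x (-1) with rfl | hx1
      · have hb : b = c := by
          rw [← h]; norm_num
        right; right; simp [hb]
      · left
        have hx1' : x + 1 ≠ 0 := fun hh => hx1 (by linear_combination hh)
        field_simp at h
        linear_combination -h
    · intro h
      rcases h with h | h | h
      · have hx0 : x ≠ 0 := by
          intro rfl'; rw [rfl'] at h; simp at h; exact hc0 (by linear_combination h)
        have hx1' : x + 1 ≠ 0 := by
          intro hh
          have hx : x = -1 := by linear_combination hh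
          rw [hx] at h
          have : (1:F) = 0 := by linear_combination h
          simp at this
        field_simp
        linear_combination -h
      · split_ifs at h with hb
        · simp only [mem_singleton] at h
          subst h; subst hb; norm_num
        · simp at h
      · split_ifs at h with hb
        · simp only [mem_singleton] at h
          subst h; subst hb; norm_num
        · simp at h
  have hd1 : Disjoint (univ.filter fun x : F => b*x^2 + (b+c-1)*x + c = 0)
      ((if b = 1 then ({0} : Finset F) else ∅) ∪ (if b = c then ({-1} : Finset F) else ∅)) := by
    rw [Finset.disjoint_right]
    intro x hx hx'
    simp only [mem_union] at hx
    simp only [mem_filter, mem_univ, true_and] at hx'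
    rcases hx with h | h
    · split_ifs at h with hb
      · simp only [mem_singleton] at h; subst h
        norm_num at hx'; exact hc0 hx'
      · simp at h
    · split_ifs at h with hb
      · simp only [mem_singleton] at h; subst h
        have : (1:F) = 0 := by linear_combination hx'
        simp at this
      · simp at h
  have hd2 : Disjoint (if b = 1 then ({0} : Finset F) else ∅)
      (if b = c then ({-1} : Finset F) else ∅) := by
    split_ifs with hb hb'
    · exact absurd (hb ▸ hb') hc1.symm
    all_goals simp
  rw [key, card_union_of_disjoint hd1, card_union_of_disjoint hd2]
  split_ifs <;> simp

end Aux

theorem stmt_6 (p n : ℕ) (hp : p.Prime) (hpodd : Odd p) (hn : 1 ≤ n)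
    (F : Type*) [Field F] [Fintype F] (hF : Fintype.card F = p ^ n)
    (c : F) (hc0 : c ≠ 0) (hc1 : c ≠ 1) (hc4 : c ≠ 4) (hc4i : c ≠ (4 : F)⁻¹)
    (h1 : chi F (c ^ 2 - 4 * c) = -1) (h2 : chi F (1 - 4 * c) = -1) (h3 : chi F c = 1) :
    comega F (p ^ n - 2) c 0 = (p ^ n - 5) / 2 ∧
    comega F (p ^ n - 2) c 1 = 5 ∧
    comega F (p ^ n - 2) c 2 = (p ^ n - 5) / 2 ∧
    ∀ i, 3 ≤ i → comega F (p ^ n - 2) c i = 0 := by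
  classical
  have hp3 : 3 ≤ p := by
    have h2le := hp.two_le
    have := Nat.odd_iff.mp hpodd
    omega
  have hq3 : 3 ≤ Fintype.card F := by
    rw [hF]
    calc 3 ≤ p := hp3
    _ = p ^ 1 := (pow_one p).symm
    _ ≤ p ^ n := Nat.pow_le_pow_right (by omega) hn
  have hqodd : Fintype.card F % 2 = 1 := by
    rw [hF]; exact Nat.odd_iff.mp hpodd.pow
  have h2F : (2:F) ≠ 0 :=
    Ring.two_ne_zero (fun h => by
      rw [FiniteField.even_card_iff_char_two] at h; omega)
  have h4F : (4:F) ≠ 0 := by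
    intro h
    have : (2:F) * 2 = 0 := by linear_combination h
    rcases mul_eq_zero.mp this with h' | h' <;> exact h2F h'
  -- square root of c
  have hcsq : IsSquare c := by
    by_contra hcon
    simp only [chi, if_neg hc0, if_neg hcon] at h3
    norm_num at h3
  obtain ⟨s, hs⟩ := hcsq
  have hs0 : s ≠ 0 := fun h => hc0 (by rw [hs, h, mul_zero])
  -- nonsquare facts
  have hns1 : ∀ u : F, c^2 - 4*c ≠ u * u := by
    intro u hu
    have hne : c^2 - 4*c ≠ 0 := by
      intro h0; simp only [chi, if_pos h0] at h1; norm_num at h1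
    have hsq : IsSquare (c^2 - 4*c) := ⟨u, hu⟩
    simp only [chi, if_neg hne, if_pos hsq] at h1; norm_num at h1
  have hns2 : ∀ u : F, 1 - 4*c ≠ u * u := by
    intro u hu
    have hne : 1 - 4*c ≠ 0 := by
      intro h0; simp only [chi, if_pos h0] at h2; norm_num at h2
    have hsq : IsSquare (1 - 4*c) := ⟨u, hu⟩
    simp only [chi, if_neg hne, if_pos hsq] at h2; norm_num at h2
  set q := Fintype.card F with hqdef
  set δ : F → ℕ :=
    fun b => (univ.filter fun x : F => (x+1)^(q-2) - c*x^(q-2) = b).card with hδdef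
  have hdec : ∀ b : F, δ b
      = (univ.filter fun x : F => b*x^2 + (b+c-1)*x + c = 0).card
        + ((if b = 1 then 1 else 0) + (if b = c then 1 else 0)) :=
    fun b => delta_decomp hq3 hc0 hc1 b
  have hcd : ∀ b, cdelta F (p^n - 2) c b = δ b := by
    intro b
    rw [cdelta, ← hF, Nat.card_eq_fintype_card, Fintype.card_subtype]
  have hcom : ∀ i, comega F (p^n - 2) c i = (univ.filter fun b : F => δ b = i).card := by
    intro i
    rw [comega, Nat.card_eq_fintype_card, Fintype.card_subtype]
    apply congrArg
    apply filter_congr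
    intro b _
    simp only [hcd b]
  -- discriminant factorization
  have hdisc : ∀ b : F, discrim b (b+c-1) c = (b - (s+1)^2) * (b - (s-1)^2) := by
    intro b
    rw [discrim]
    linear_combination (c + s*s - 2*b - 2) * hs
  -- delta values on the five special points
  have hδ0 : δ 0 = 1 := by
    rw [hdec 0, if_neg (zero_ne_one), if_neg (fun h => hc0 h.symm)]
    have heq : (univ.filter fun x : F => (0:F)*x^2 + ((0:F)+c-1)*x + c = 0)
        = (univ.filter fun x : F => (c-1)*x + c = 0) := by
      apply filter_congr; intro x _
      constructor <;> intro h <;> linear_combination h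
    rw [heq, lin_roots (sub_ne_zero.mpr hc1)]
  have hδ1 : δ 1 = 1 := by
    rw [hdec 1, if_pos rfl, if_neg (fun h => hc1 h.symm)]
    rw [quad_roots_zero (fun u hu => hns1 u (by rw [discrim] at hu; linear_combination hu))]
  have hδc : δ c = 1 := by
    rw [hdec c, if_neg hc1, if_pos rfl]
    rw [quad_roots_zero (fun u hu => hns2 u (by rw [discrim] at hu; linear_combination hu))]
  -- facts about (s±1)^2
  have hsp1 : s + 1 ≠ 0 := by
    intro h
    apply hc1
    rw [hs, show s = -1 by linear_combination h]; ring
  have hsm1 : s - 1 ≠ 0 := by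
    intro h
    apply hc1
    rw [hs, show s = 1 by linear_combination h]; ring
  have hb0ne0 : ((s+1)^2 : F) ≠ 0 := pow_ne_zero 2 hsp1
  have hb1ne0 : ((s-1)^2 : F) ≠ 0 := pow_ne_zero 2 hsm1
  have hb0ne1 : ((s+1)^2 : F) ≠ 1 := by
    intro h
    have h4 : s * (s + 2) = 0 := by linear_combination h
    rcases mul_eq_zero.mp h4 with h' | h'
    · exact hs0 h'
    · apply hc4
      rw [hs, show s = -2 by linear_combination h']; norm_num
  have hb1ne1 : ((s-1)^2 : F) ≠ 1 := by
    intro h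
    have h4 : s * (s - 2) = 0 := by linear_combination h
    rcases mul_eq_zero.mp h4 with h' | h'
    · exact hs0 h'
    · apply hc4
      rw [hs, show s = 2 by linear_combination h']; norm_num
  have hb0nec : ((s+1)^2 : F) ≠ c := by
    intro h
    have h4 : (4:F) * c = 1 := by
      rw [hs]; linear_combination (2*s - 1) * (h.trans hs)
    exact hc4i (eq_inv_of_mul_eq_one_left (by linear_combination h4))
  have hb1nec : ((s-1)^2 : F) ≠ c := by
    intro h
    have h4 : (4:F) * c = 1 := by
      rw [hs]; linear_combination (-(2*s + 1)) * (h.trans hs)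
    exact hc4i (eq_inv_of_mul_eq_one_left (by linear_combination h4))
  have hb0neb1 : ((s+1)^2 : F) ≠ (s-1)^2 := by
    intro h
    have h4 : (4:F) * s = 0 := by linear_combination h
    rcases mul_eq_zero.mp h4 with h' | h'
    · exact h4F h'
    · exact hs0 h'
  have hδb0 : δ ((s+1)^2) = 1 := by
    rw [hdec _, if_neg hb0ne1, if_neg hb0nec]
    rw [quad_roots_one h2F hb0ne0 (by rw [hdisc]; ring)]
  have hδb1 : δ ((s-1)^2) = 1 := by
    rw [hdec _, if_neg hb1ne1, if_neg hb1nec]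
    rw [quad_roots_one h2F hb1ne0 (by rw [hdisc]; ring)]
  -- generic b
  have hgen : ∀ b : F, b ≠ 0 → b ≠ 1 → b ≠ c → b ≠ (s+1)^2 → b ≠ (s-1)^2 →
      δ b = 0 ∨ δ b = 2 := by
    intro b hb0 hb1 hbc hbp hbm
    rw [hdec b, if_neg hb1, if_neg hbc]
    simp only [add_zero]
    have hdne : discrim b (b+c-1) c ≠ 0 := by
      rw [hdisc]
      exact mul_ne_zero (sub_ne_zero.mpr hbp) (sub_ne_zero.mpr hbm)
    by_cases hsq : ∃ u : F, discrim b (b+c-1) c = u * u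
    · obtain ⟨u, hu⟩ := hsq
      have hu0 : u ≠ 0 := fun h => hdne (by rw [hu, h, mul_zero])
      right; exact quad_roots_two h2F hb0 hu0 hu
    · left
      push_neg at hsq
      exact quad_roots_zero hsq
  have hle2 : ∀ b : F, δ b ≤ 2 := by
    intro b
    by_cases e0 : b = 0
    · rw [e0, hδ0]; omega
    by_cases e1 : b = 1
    · rw [e1, hδ1]; omega
    by_cases ec : b = c
    · rw [ec, hδc]; omega
    by_cases ep : b = (s+1)^2
    · rw [ep, hδb0]; omega
    by_cases em : b = (s-1)^2
    · rw [em, hδb1]; omega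
    rcases hgen b e0 e1 ec ep em with h | h <;> omega
  -- the special set
  set S : Finset F := {0, 1, c, (s+1)^2, (s-1)^2} with hS
  have hScard : S.card = 5 := by
    rw [hS]
    rw [card_insert_of_notMem (by
      simp only [mem_insert, mem_singleton]
      push_neg
      exact ⟨zero_ne_one, fun h => hc0 h.symm, fun h => hb0ne0 h.symm, fun h => hb1ne0 h.symm⟩)]
    rw [card_insert_of_notMem (by
      simp only [mem_insert, mem_singleton]
      push_neg
      exact ⟨fun h => hc1 h.symm, fun h => hb0ne1 h.symm, fun h => hb1ne1 h.symm⟩)]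
    rw [card_insert_of_notMem (by
      simp only [mem_insert, mem_singleton]
      push_neg
      exact ⟨fun h => hb0nec h.symm, fun h => hb1nec h.symm⟩)]
    rw [card_insert_of_notMem (by
      simp only [mem_singleton]
      exact hb0neb1)]
    rw [card_singleton]
  have hδS : ∀ b ∈ S, δ b = 1 := by
    intro b hb
    simp only [hS, mem_insert, mem_singleton] at hb
    rcases hb with rfl | rfl | rfl | rfl | rfl
    exacts [hδ0, hδ1, hδc, hδb0, hδb1]
  have hfilt1 : univ.filter (fun b : F => δ b = 1) = S := by
    ext b
    simp only [mem_filter, mem_univ, true_and]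
    constructor
    · intro h
      by_contra hb
      simp only [hS, mem_insert, mem_singleton] at hb
      push_neg at hb
      rcases hgen b hb.1 hb.2.1 hb.2.2.1 hb.2.2.2.1 hb.2.2.2.2 with h' | h' <;> omega
    · exact hδS b
  -- total count
  have hsum : ∑ b : F, δ b = q := by
    have h := card_eq_sum_card_fiberwise (s := (univ : Finset F)) (t := (univ : Finset F))
      (f := fun x : F => (x+1)^(q-2) - c*x^(q-2)) (fun x _ => mem_univ _)
    rw [card_univ] at h
    exact h.symm
  have hin : ∀ y : ℕ, ∑ b ∈ univ.filter (fun b : F => δ b = y), δ b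
      = y * (univ.filter fun b : F => δ b = y).card := by
    intro y
    rw [Finset.sum_congr rfl (fun b hb => (mem_filter.mp hb).2), Finset.sum_const,
      smul_eq_mul, mul_comm]
  have hfib := Finset.sum_fiberwise_of_maps_to (s := (univ : Finset F)) (t := Finset.range 3)
    (g := fun b : F => δ b) (f := fun b : F => δ b)
    (fun b _ => mem_range.mpr (by show δ b < 3; have := hle2 b; omega))
  rw [Finset.sum_range_succ, Finset.sum_range_succ, Finset.sum_range_one, hsum,
    hin 0, hin 1, hin 2, hfilt1, hScard] at hfib
  -- hfib : 0 * card0' + 1 * 5 + 2 * card2 = q  (with card0' the δ=0 fiber)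
  have hpart := card_eq_sum_card_fiberwise (s := (univ : Finset F)) (t := Finset.range 3)
    (f := fun b : F => δ b) (fun b _ => mem_range.mpr (by show δ b < 3; have := hle2 b; omega))
  rw [Finset.sum_range_succ, Finset.sum_range_succ, Finset.sum_range_one, card_univ,
    hfilt1, hScard] at hpart
  -- hpart : q = card0 + 5 + card2
  beta_reduce at hfib hpart
  refine ⟨?_, ?_, ?_, ?_⟩
  · rw [hcom 0, ← hF]; omega
  · rw [hcom 1, hfilt1, hScard]
  · rw [hcom 2, ← hF]; omega
  · intro i hi
    rw [hcom i]
    rw [card_eq_zero, filter_eq_empty_iff]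
    intro b _
    show ¬ δ b = i
    have := hle2 b
    omega
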